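/- For every positive integer n, W(K_{2n}) = 2n - 1 + σ_n, where σ_n is the maximum number of splitted perfect matchings over all 1-factorizations of the complete graph K_{2n}. -/

import Mathlib

/-- An interval `t`-coloring of the complete graph on `Fin m`:
a proper edge-coloring with colors in `{1,…,t}`, using every color,
such that the spectrum (set of colors incident to each vertex) is an
interval of consecutive integers. -/
def IsIntervalColoring (m t : ℕ) (c : Sym2 (Fin m) → ℕ) : Prop :=
  (∀ u v w : Fin m, u ≠ v → u ≠ w → v ≠ w → c s(u, v) ≠ c s(u, w)) ∧
  (∀ u v : Fin m, u ≠ v → c s(u, v) ∈ Finset.Icc 1 t) ∧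
  (∀ k : ℕ, 1 ≤ k → k ≤ t → ∃ u v : Fin m, u ≠ v ∧ c s(u, v) = k) ∧
  (∀ v : Fin m, ∃ a b : ℕ,
    {k : ℕ | ∃ u : Fin m, u ≠ v ∧ c s(u, v) = k} = Set.Icc a b)

/-- `W m` is the greatest `t` for which the complete graph on `m` vertices
has an interval `t`-coloring. -/
noncomputable def W (m : ℕ) : ℕ :=
  sSup {t : ℕ | ∃ c : Sym2 (Fin m) → ℕ, IsIntervalColoring m t c}

/-- A perfect matching of the complete graph on `Fin m`, given as a set of
(non-loop) edges covering every vertex exactly once. -/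
def IsPerfectMatchingSet (m : ℕ) (F : Set (Sym2 (Fin m))) : Prop :=
  (∀ e ∈ F, ¬ e.IsDiag) ∧ (∀ v : Fin m, ∃! e, e ∈ F ∧ v ∈ e)

/-- A perfect matching of `K_{2n}` is splitted (w.r.t. the natural ordering of
`Fin (2*n)` into `n` consecutive pairs) if for some `i` with `1 ≤ i ≤ n-1`
every edge joins two vertices among the first `2*i` ones or two vertices
among the last `2*n - 2*i` ones. -/
def IsSplitted (n : ℕ) (F : Set (Sym2 (Fin (2 * n)))) : Prop :=
  ∃ i : ℕ, 1 ≤ i ∧ i ≤ n - 1 ∧ ∀ u v : Fin (2 * n), s(u, v) ∈ F →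
    (((u : ℕ) < 2 * i ∧ (v : ℕ) < 2 * i) ∨ (2 * i ≤ (u : ℕ) ∧ 2 * i ≤ (v : ℕ)))

/-- A 1-factorization of `K_{2n}`: a family of `2n-1` perfect matchings such
that every edge belongs to exactly one of them. -/
def IsOneFactorization (n : ℕ) (𝔉 : Fin (2 * n - 1) → Set (Sym2 (Fin (2 * n)))) : Prop :=
  (∀ j, IsPerfectMatchingSet (2 * n) (𝔉 j)) ∧
  (∀ e : Sym2 (Fin (2 * n)), ¬ e.IsDiag → ∃! j, e ∈ 𝔉 j)

/-- `sigmaSplit n` is the maximum number of splitted perfect matchings over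
all 1-factorizations of `K_{2n}`. -/
noncomputable def sigmaSplit (n : ℕ) : ℕ :=
  sSup {s : ℕ | ∃ 𝔉 : Fin (2 * n - 1) → Set (Sym2 (Fin (2 * n))),
    IsOneFactorization n 𝔉 ∧ {j : Fin (2 * n - 1) | IsSplitted n (𝔉 j)}.ncard = s}


noncomputable def colorNat (n : ℕ) (a b : ℕ) : ℕ :=
  if a = 2*n-1 then (if b = 2*n-1 then 0 else b+1)
  else if b = 2*n-1 then a+1
  else 1 + ((n : ZMod (2*n-1)) * ((a : ZMod (2*n-1)) + (b : ZMod (2*n-1)))).val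

lemma colorNat_comm (n a b : ℕ) : colorNat n a b = colorNat n b a := by
  unfold colorNat
  by_cases h1 : a = 2*n-1 <;> by_cases h2 : b = 2*n-1 <;> simp [h1, h2, add_comm]

section
variable {n : ℕ} (hn : 1 ≤ n)
include hn

lemma cast2n : ((2*n : ℕ) : ZMod (2*n-1)) = 1 := by
  have : 2*n = (2*n-1) + 1 := by omega
  rw [this]; push_cast; simp [ZMod.natCast_self]

lemma zmod_cancel {x y : ZMod (2*n-1)} (h : (n : ZMod (2*n-1)) * x = n * y) : x = y := by
  have h2 : ((2*n : ℕ) : ZMod (2*n-1)) = 1 := cast2n hn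
  calc x = ((2*n:ℕ) : ZMod (2*n-1)) * x := by rw [h2, one_mul]
    _ = ((2*n:ℕ) : ZMod (2*n-1)) * y := by
        push_cast
        calc (2:ZMod (2*n-1)) * n * x = 2 * ((n:ZMod (2*n-1)) * x) := by ring
          _ = 2 * ((n:ZMod (2*n-1)) * y) := by rw [h]
          _ = 2 * n * y := by ring
    _ = y := by rw [h2, one_mul]

omit hn in
lemma zmod_nat_inj {a b : ℕ} (ha : a < 2*n-1) (hb : b < 2*n-1)
    (h : (a : ZMod (2*n-1)) = b) : a = b := by
  have := congrArg ZMod.val h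
  rwa [ZMod.val_natCast, ZMod.val_natCast, Nat.mod_eq_of_lt ha, Nat.mod_eq_of_lt hb] at this

lemma zval_lt (z : ZMod (2*n-1)) : z.val < 2*n-1 := by
  haveI : NeZero (2*n-1) := ⟨by omega⟩
  exact ZMod.val_lt z

lemma zval_cast (z : ZMod (2*n-1)) : ((z.val : ℕ) : ZMod (2*n-1)) = z := by
  haveI : NeZero (2*n-1) := ⟨by omega⟩
  rw [ZMod.natCast_val, ZMod.cast_id]

omit hn in
lemma colorNat_generic {a b : ℕ} (ha : a ≠ 2*n-1) (hb : b ≠ 2*n-1) :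
    colorNat n a b = 1 + ((n : ZMod (2*n-1)) * ((a : ZMod (2*n-1)) + b)).val := by
  unfold colorNat; simp [ha, hb]

lemma colorNat_mem {a b : ℕ} (ha : a < 2*n) (hb : b < 2*n) (hab : a ≠ b) :
    colorNat n a b ∈ Finset.Icc 1 (2*n-1) := by
  have hv := zval_lt hn ((n : ZMod (2*n-1)) * ((a : ZMod (2*n-1)) + b))
  unfold colorNat
  rcases eq_or_ne a (2*n-1) with h1 | h1 <;> rcases eq_or_ne b (2*n-1) with h2 | h2 <;>
    simp [h1, h2, Finset.mem_Icc] <;> omega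

/-- injectivity: two distinct neighbors of `a` get distinct colors -/
lemma colorNat_inj {a b c : ℕ} (ha : a < 2*n) (hb : b < 2*n) (hc : c < 2*n)
    (hab : a ≠ b) (hac : a ≠ c) (hbc : b ≠ c) : colorNat n a b ≠ colorNat n a c := by
  intro h
  rcases eq_or_ne a (2*n-1) with h1 | h1
  · -- colors b+1 vs c+1
    have hb' : b ≠ 2*n-1 := by omega
    have hc' : c ≠ 2*n-1 := by omega
    unfold colorNat at h
    simp [h1, hb', hc'] at h
    omega
  rcases eq_or_ne b (2*n-1) with h2 | h2
  · -- b = ∞ : colors a+1 vs generic c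
    have hc' : c ≠ 2*n-1 := by omega
    unfold colorNat at h
    simp [h1, h2, hc'] at h
    -- h : a = (n * (a + c)).val
    have hval : a = ((n : ZMod (2*n-1)) * ((a : ZMod (2*n-1)) + c)).val := by omega
    have hcast : (a : ZMod (2*n-1)) = (n : ZMod (2*n-1)) * ((a : ZMod (2*n-1)) + c) := by
      have := congrArg (Nat.cast : ℕ → ZMod (2*n-1)) hval
      rwa [zval_cast hn] at this
    -- multiply by 2 : 2a = (2n)(a+c) = a + c
    have h2a : (2 : ZMod (2*n-1)) * a = (a : ZMod (2*n-1)) + c := by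
      calc (2 : ZMod (2*n-1)) * a = 2 * ((n : ZMod (2*n-1)) * ((a : ZMod (2*n-1)) + c)) := by
            rw [← hcast]
        _ = ((2*n : ℕ) : ZMod (2*n-1)) * ((a : ZMod (2*n-1)) + c) := by push_cast; ring
        _ = (a : ZMod (2*n-1)) + c := by rw [cast2n hn, one_mul]
    have : (a : ZMod (2*n-1)) = c := by
      have := h2a
      linear_combination this
    exact hac (zmod_nat_inj (by omega) (by omega) this)
  rcases eq_or_ne c (2*n-1) with h3 | h3
  · -- c = ∞, symmetric
    unfold colorNat at h
    simp [h1, h2, h3] at h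
    have hval : a = ((n : ZMod (2*n-1)) * ((a : ZMod (2*n-1)) + b)).val := by omega
    have hcast : (a : ZMod (2*n-1)) = (n : ZMod (2*n-1)) * ((a : ZMod (2*n-1)) + b) := by
      have := congrArg (Nat.cast : ℕ → ZMod (2*n-1)) hval
      rwa [zval_cast hn] at this
    have h2a : (2 : ZMod (2*n-1)) * a = (a : ZMod (2*n-1)) + b := by
      calc (2 : ZMod (2*n-1)) * a = 2 * ((n : ZMod (2*n-1)) * ((a : ZMod (2*n-1)) + b)) := by
            rw [← hcast]
        _ = ((2*n : ℕ) : ZMod (2*n-1)) * ((a : ZMod (2*n-1)) + b) := by push_cast; ring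
        _ = (a : ZMod (2*n-1)) + b := by rw [cast2n hn, one_mul]
    have : (a : ZMod (2*n-1)) = b := by
      linear_combination h2a
    exact hab (zmod_nat_inj (by omega) (by omega) this)
  · -- generic vs generic
    unfold colorNat at h
    simp [h1, h2, h3] at h
    have hcast : (n : ZMod (2*n-1)) * ((a : ZMod (2*n-1)) + b)
        = (n : ZMod (2*n-1)) * ((a : ZMod (2*n-1)) + c) := by
      rw [← zval_cast hn ((n : ZMod (2*n-1)) * ((a : ZMod (2*n-1)) + b)), h, zval_cast hn]
    have := zmod_cancel hn hcast
    have hbc' : (b : ZMod (2*n-1)) = c := by linear_combination this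
    exact hbc (zmod_nat_inj (by omega) (by omega) hbc')

end

lemma colorNat_inf {n a : ℕ} (ha : a ≠ 2*n-1) : colorNat n a (2*n-1) = a + 1 := by
  unfold colorNat; simp [ha]

section
variable {n : ℕ} (hn : 1 ≤ n)
include hn

lemma colorNat_surj {b k : ℕ} (hb : b < 2*n) (hk1 : 1 ≤ k) (hk2 : k ≤ 2*n-1) :
    ∃ a : ℕ, a < 2*n ∧ a ≠ b ∧ colorNat n a b = k := by
  rcases eq_or_ne b (2*n-1) with h2 | h2
  · refine ⟨k-1, by omega, by omega, ?_⟩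
    rw [h2, colorNat_inf (by omega)]
    omega
  rcases eq_or_ne k (b+1) with hk | hk
  · refine ⟨2*n-1, by omega, by omega, ?_⟩
    rw [colorNat_comm, colorNat_inf h2]
    omega
  · set uz : ZMod (2*n-1) := 2 * ((k-1 : ℕ) : ZMod (2*n-1)) - b with huz
    refine ⟨uz.val, by have := zval_lt hn uz; omega, ?_, ?_⟩
    · intro hab
      have hvb : (b : ZMod (2*n-1)) = uz := by rw [← hab, zval_cast hn]
      have h2b : (2 : ZMod (2*n-1)) * b = 2 * ((k-1 : ℕ) : ZMod (2*n-1)) := by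
        rw [huz] at hvb; linear_combination hvb
      have : ((2*n : ℕ) : ZMod (2*n-1)) * b = ((2*n:ℕ) : ZMod (2*n-1)) * ((k-1 : ℕ) : ZMod (2*n-1)) := by
        push_cast
        linear_combination (n : ZMod (2*n-1)) * h2b
      rw [cast2n hn, one_mul, one_mul] at this
      have := zmod_nat_inj (by omega) (by omega) this
      omega
    · rw [colorNat_generic (by have := zval_lt hn uz; omega) h2, zval_cast hn]
      have : (n : ZMod (2*n-1)) * (uz + b) = ((k-1 : ℕ) : ZMod (2*n-1)) := by
        rw [huz]
        have : (n : ZMod (2*n-1)) * (2 * ((k-1:ℕ) : ZMod (2*n-1)) - b + b)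
            = ((2*n : ℕ) : ZMod (2*n-1)) * ((k-1:ℕ) : ZMod (2*n-1)) := by push_cast; ring
        rw [this, cast2n hn, one_mul]
      rw [this, ZMod.val_natCast, Nat.mod_eq_of_lt (by omega)]
      omega
end

noncomputable def baseColoring (n : ℕ) : Sym2 (Fin (2*n)) → ℕ :=
  Sym2.lift ⟨fun u v => colorNat n u.val v.val, fun _ _ => colorNat_comm n _ _⟩

lemma base' (n : ℕ) (hn : 1 ≤ n) : IsIntervalColoring (2*n) (2*n-1) (baseColoring n) := by
  have hval : ∀ u v : Fin (2*n), baseColoring n s(u,v) = colorNat n u.val v.val := fun _ _ => rfl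
  refine ⟨?_, ?_, ?_, ?_⟩
  · intro u v w huv huw hvw
    rw [hval, hval]
    exact colorNat_inj hn u.isLt v.isLt w.isLt
      (Fin.val_ne_of_ne huv) (Fin.val_ne_of_ne huw) (Fin.val_ne_of_ne hvw)
  · intro u v huv
    rw [hval]
    exact colorNat_mem hn u.isLt v.isLt (Fin.val_ne_of_ne huv)
  · intro k hk1 hk2
    have h0 : (0:ℕ) < 2*n := by omega
    obtain ⟨a, ha, hab, hc⟩ := colorNat_surj hn h0 hk1 hk2
    exact ⟨⟨a, ha⟩, ⟨0, h0⟩, Fin.ne_of_val_ne hab, hc⟩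
  · intro v
    refine ⟨1, 2*n-1, ?_⟩
    ext k
    simp only [Set.mem_setOf_eq, Set.mem_Icc]
    constructor
    · rintro ⟨u, hu, rfl⟩
      have := colorNat_mem hn u.isLt v.isLt (Fin.val_ne_of_ne hu)
      rw [Finset.mem_Icc] at this
      exact this
    · rintro ⟨hk1, hk2⟩
      obtain ⟨a, ha, hab, hc⟩ := colorNat_surj hn v.isLt hk1 hk2
      exact ⟨⟨a, ha⟩, Fin.ne_of_val_ne hab, hc⟩


-- lower set lemma
lemma lowerset_iff {N : ℕ} (S : Finset (Fin N))
    (hS : ∀ a b : Fin N, a ≤ b → b ∈ S → a ∈ S) (a : Fin N) : a ∈ S ↔ (a : ℕ) < S.card := by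
  constructor
  · intro ha
    have h1 : Finset.Iic a ⊆ S := fun b hb => hS b a (Finset.mem_Iic.mp hb) ha
    have := Finset.card_le_card h1
    rw [Fin.card_Iic] at this; omega
  · intro ha
    by_contra h
    have h1 : S ⊆ Finset.Iio a := by
      intro b hb
      rw [Finset.mem_Iio]
      by_contra hba
      exact h (hS a b (not_lt.mp hba) hb)
    have := Finset.card_le_card h1
    rw [Fin.card_Iio] at this; omega

section DirA
attribute [local instance] Classical.propDecidable
variable (n : ℕ) (𝔉 : Fin (2 * n - 1) → Set (Sym2 (Fin (2 * n))))

noncomputable def splitIdx (j : Fin (2*n-1)) : ℕ :=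
  if h : IsSplitted n (𝔉 j) then h.choose else n

noncomputable def sortPerm : Equiv.Perm (Fin (2*n-1)) := Tuple.sort (splitIdx n 𝔉)

noncomputable def kkOf (j : Fin (2*n-1)) : ℕ := ((sortPerm n 𝔉).symm j : ℕ)

noncomputable def valFun (s : ℕ) (j : Fin (2*n-1)) (e : Sym2 (Fin (2*n))) : ℕ :=
  if (∀ p ∈ e, (p:ℕ) < 2 * splitIdx n 𝔉 j) ∨ s ≤ kkOf n 𝔉 j
  then kkOf n 𝔉 j + 1 else kkOf n 𝔉 j + 2*n

noncomputable def colA (s : ℕ) (e : Sym2 (Fin (2*n))) : ℕ :=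
  sSup {col | ∃ j, e ∈ 𝔉 j ∧ col = valFun n 𝔉 s j e}

variable {n 𝔉}

lemma splitIdx_spec {j} (h : IsSplitted n (𝔉 j)) :
    1 ≤ splitIdx n 𝔉 j ∧ splitIdx n 𝔉 j ≤ n - 1 ∧
    ∀ u v : Fin (2 * n), s(u, v) ∈ 𝔉 j →
      (((u : ℕ) < 2 * splitIdx n 𝔉 j ∧ (v : ℕ) < 2 * splitIdx n 𝔉 j) ∨
       (2 * splitIdx n 𝔉 j ≤ (u : ℕ) ∧ 2 * splitIdx n 𝔉 j ≤ (v : ℕ))) := by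
  unfold splitIdx
  rw [dif_pos h]
  exact h.choose_spec

lemma splitIdx_not {j} (h : ¬ IsSplitted n (𝔉 j)) : splitIdx n 𝔉 j = n := by
  unfold splitIdx; rw [dif_neg h]

lemma splitIdx_lt_iff (hn : 1 ≤ n) {j} : IsSplitted n (𝔉 j) ↔ splitIdx n 𝔉 j < n := by
  constructor
  · intro h; have := (splitIdx_spec h).2.1; omega
  · intro h; by_contra hc; rw [splitIdx_not hc] at h; omega

end DirA

section DirAMain
attribute [local instance] Classical.propDecidable
variable {n : ℕ} {𝔉 : Fin (2 * n - 1) → Set (Sym2 (Fin (2 * n)))}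

lemma card_Sp (hn : 1 ≤ n) :
    (Finset.univ.filter (fun p => IsSplitted n (𝔉 (sortPerm n 𝔉 p)))).card
      = {j | IsSplitted n (𝔉 j)}.ncard := by
  rw [Set.ncard_eq_toFinset_card', Set.toFinset_setOf]
  apply Finset.card_nbij (fun p => sortPerm n 𝔉 p)
  · intro a ha; simp only [Finset.mem_coe, Finset.mem_filter, Finset.mem_univ, true_and] at ha ⊢
    exact ha
  · intro a _ b _ h
    exact (sortPerm n 𝔉).injective h
  · intro j hj
    simp only [Finset.coe_filter, Set.mem_setOf_eq, Finset.mem_univ, true_and] at hj ⊢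
    exact ⟨(sortPerm n 𝔉).symm j,
      by simp only [Set.mem_setOf_eq, Equiv.apply_symm_apply]; exact hj,
      Equiv.apply_symm_apply _ j⟩

lemma mem_split_iff (hn : 1 ≤ n) (p : Fin (2*n-1)) :
    IsSplitted n (𝔉 (sortPerm n 𝔉 p)) ↔ (p : ℕ) < {j | IsSplitted n (𝔉 j)}.ncard := by
  rw [← card_Sp (𝔉 := 𝔉) hn]
  have := lowerset_iff (Finset.univ.filter (fun p => IsSplitted n (𝔉 (sortPerm n 𝔉 p))))
    (fun a b hab hb => by
      simp only [Finset.mem_filter, Finset.mem_univ, true_and] at hb ⊢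
      rw [splitIdx_lt_iff hn] at hb ⊢
      have hmono := Tuple.monotone_sort (splitIdx n 𝔉) hab
      simp only [Function.comp_apply] at hmono
      calc splitIdx n 𝔉 (Tuple.sort (splitIdx n 𝔉) a)
          ≤ splitIdx n 𝔉 (Tuple.sort (splitIdx n 𝔉) b) := hmono
        _ < n := hb) p
  simp only [Finset.mem_filter, Finset.mem_univ, true_and] at this
  exact this

lemma splitted_iff_kk (hn : 1 ≤ n) (j : Fin (2*n-1)) :
    IsSplitted n (𝔉 j) ↔ kkOf n 𝔉 j < {j | IsSplitted n (𝔉 j)}.ncard := by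
  have := mem_split_iff (𝔉 := 𝔉) hn ((sortPerm n 𝔉).symm j)
  rwa [Equiv.apply_symm_apply] at this

lemma kk_sort (p : Fin (2*n-1)) : kkOf n 𝔉 (sortPerm n 𝔉 p) = (p : ℕ) := by
  unfold kkOf; rw [Equiv.symm_apply_apply]

lemma dirA' (hn : 1 ≤ n) (hF : IsOneFactorization n 𝔉) :
    ∃ c : Sym2 (Fin (2*n)) → ℕ,
    (∀ u v w : Fin (2*n), u ≠ v → u ≠ w → v ≠ w → c s(u, v) ≠ c s(u, w)) ∧
    (∀ u v : Fin (2*n), u ≠ v → c s(u, v) ∈ Finset.Icc 1 (2*n-1+{j | IsSplitted n (𝔉 j)}.ncard)) ∧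
    (∀ k : ℕ, 1 ≤ k → k ≤ 2*n-1+{j | IsSplitted n (𝔉 j)}.ncard →
      ∃ u v : Fin (2*n), u ≠ v ∧ c s(u, v) = k) ∧
    (∀ v : Fin (2*n), ∃ a b : ℕ,
      {k : ℕ | ∃ u : Fin (2*n), u ≠ v ∧ c s(u, v) = k} = Set.Icc a b) := by
  set s := {j | IsSplitted n (𝔉 j)}.ncard with hs
  have hnd : ∀ (u v : Fin (2*n)), u ≠ v → ¬ (s(u,v)).IsDiag := by
    intro u v h hd; exact h (Sym2.mk_isDiag_iff.mp hd)
  have hkklt : ∀ j, kkOf n 𝔉 j < 2*n-1 := fun j => ((sortPerm n 𝔉).symm j).isLt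
  have hkk_inj : ∀ j j', j ≠ j' → kkOf n 𝔉 j ≠ kkOf n 𝔉 j' := by
    intro j j' hne h
    exact hne (by
      have : (sortPerm n 𝔉).symm j = (sortPerm n 𝔉).symm j' := Fin.ext h
      simpa using congrArg (sortPerm n 𝔉) this)
  have hs_le : s ≤ 2*n-1 := by
    rw [hs, ← card_Sp (𝔉 := 𝔉) hn]
    calc (Finset.univ.filter _).card ≤ Finset.univ.card := Finset.card_filter_le _ _
      _ = 2*n-1 := by simp
  have hsplit_kk : ∀ j, IsSplitted n (𝔉 j) ↔ kkOf n 𝔉 j < s := splitted_iff_kk hn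
  have hedge_at : ∀ (v : Fin (2*n)) (j), ∃ u, u ≠ v ∧ s(u,v) ∈ 𝔉 j := by
    intro v j
    obtain ⟨e, ⟨hmem, hv⟩, -⟩ := (hF.1 j).2 v
    obtain ⟨b, rfl⟩ := Sym2.mem_iff_exists.mp hv
    have hd := (hF.1 j).1 _ hmem
    have hvb : v ≠ b := fun h => hd (Sym2.mk_isDiag_iff.mpr h)
    exact ⟨b, hvb.symm, by rwa [Sym2.eq_swap]⟩
  have heval : ∀ (u v : Fin (2*n)) j, u ≠ v → s(u,v) ∈ 𝔉 j →
      colA n 𝔉 s s(u,v) = valFun n 𝔉 s j s(u,v) := by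
    intro u v j huv hmem
    unfold colA
    have : {col | ∃ j', s(u,v) ∈ 𝔉 j' ∧ col = valFun n 𝔉 s j' s(u,v)}
        = {valFun n 𝔉 s j s(u,v)} := by
      ext col
      simp only [Set.mem_setOf_eq, Set.mem_singleton_iff]
      constructor
      · rintro ⟨j', hj', rfl⟩
        rw [(hF.2 s(u,v) (hnd u v huv)).unique hj' hmem]
      · intro h; exact ⟨j, hmem, h⟩
    rw [this, csSup_singleton]
  have hval_uv : ∀ j (u v : Fin (2*n)), u ≠ v → s(u,v) ∈ 𝔉 j →
      valFun n 𝔉 s j s(u,v)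
        = if ((v:ℕ) < 2 * splitIdx n 𝔉 j ∨ s ≤ kkOf n 𝔉 j)
          then kkOf n 𝔉 j + 1 else kkOf n 𝔉 j + 2*n := by
    intro j u v huv hmem
    unfold valFun
    by_cases hks : s ≤ kkOf n 𝔉 j
    · rw [if_pos (Or.inr hks), if_pos (Or.inr hks)]
    · have hsp : IsSplitted n (𝔉 j) := (hsplit_kk j).mpr (lt_of_not_ge hks)
      rcases (splitIdx_spec hsp).2.2 u v hmem with ⟨h1, h2⟩ | ⟨h1, h2⟩
      · have hall : ∀ p ∈ s(u,v), (p:ℕ) < 2 * splitIdx n 𝔉 j := by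
          intro p hp; rcases Sym2.mem_iff.mp hp with rfl | rfl <;> assumption
        rw [if_pos (Or.inl hall), if_pos (Or.inl h2)]
      · have hnall : ¬ (∀ p ∈ s(u,v), (p:ℕ) < 2 * splitIdx n 𝔉 j) := by
          intro hc; have := hc v (by simp); omega
        have hv2 : ¬ ((v:ℕ) < 2 * splitIdx n 𝔉 j) := by omega
        rw [if_neg (not_or.mpr ⟨hnall, hks⟩), if_neg (not_or.mpr ⟨hv2, hks⟩)]
  have hval_shape : ∀ j (u v : Fin (2*n)), u ≠ v → s(u,v) ∈ 𝔉 j →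
      (valFun n 𝔉 s j s(u,v) = kkOf n 𝔉 j + 1 ∨
       (valFun n 𝔉 s j s(u,v) = kkOf n 𝔉 j + 2*n ∧ kkOf n 𝔉 j < s)) := by
    intro j u v huv hmem
    rw [hval_uv j u v huv hmem]
    by_cases h : ((v:ℕ) < 2 * splitIdx n 𝔉 j ∨ s ≤ kkOf n 𝔉 j)
    · left; rw [if_pos h]
    · right; rw [if_neg h]; push_neg at h; exact ⟨rfl, h.2⟩
  refine ⟨colA n 𝔉 s, ?_, ?_, ?_, ?_⟩
  · -- proper
    intro u v w huv huw hvw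
    obtain ⟨j1, hj1, -⟩ := hF.2 s(u,v) (hnd u v huv)
    obtain ⟨j2, hj2, -⟩ := hF.2 s(u,w) (hnd u w huw)
    have hjne : j1 ≠ j2 := by
      rintro rfl
      obtain ⟨e, -, hu⟩ := (hF.1 j1).2 u
      have h1 := hu s(u,v) ⟨hj1, by simp⟩
      have h2 := hu s(u,w) ⟨hj2, by simp⟩
      rw [← h2] at h1
      exact hvw (Sym2.congr_right.mp h1)
    rw [heval u v j1 huv hj1, heval u w j2 huw hj2]
    have hkne := hkk_inj j1 j2 hjne
    have b1 := hkklt j1; have b2 := hkklt j2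
    rcases hval_shape j1 u v huv hj1 with h1 | ⟨h1, h1'⟩ <;>
      rcases hval_shape j2 u w huw hj2 with h2 | ⟨h2, h2'⟩ <;> rw [h1, h2] <;> omega
  · -- range
    intro u v huv
    obtain ⟨j, hj, -⟩ := hF.2 s(u,v) (hnd u v huv)
    rw [heval u v j huv hj, Finset.mem_Icc]
    have := hkklt j
    rcases hval_shape j u v huv hj with h | ⟨h, h'⟩ <;> rw [h] <;> omega
  · -- all colors used
    intro k hk1 hk2
    by_cases hk : k ≤ 2*n-1
    · set p0 : Fin (2*n-1) := ⟨k-1, by omega⟩ with hp0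
      set v0 : Fin (2*n) := ⟨0, by omega⟩ with hv0
      have hv0val : (v0 : ℕ) = 0 := rfl
      have hkkj : kkOf n 𝔉 (sortPerm n 𝔉 p0) = k - 1 := kk_sort _
      obtain ⟨u, hu, hmem⟩ := hedge_at v0 (sortPerm n 𝔉 p0)
      refine ⟨u, v0, hu, ?_⟩
      rw [heval _ _ _ hu hmem, hval_uv _ _ _ hu hmem]
      by_cases hks : s ≤ kkOf n 𝔉 (sortPerm n 𝔉 p0)
      · rw [if_pos (Or.inr hks)]; omega
      · have hsp := (hsplit_kk _).mpr (lt_of_not_ge hks)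
        have hi1 := (splitIdx_spec hsp).1
        rw [if_pos (Or.inl (by omega))]
        omega
    · set p0 : Fin (2*n-1) := ⟨k-2*n, by omega⟩ with hp0
      set v1 : Fin (2*n) := ⟨2*n-1, by omega⟩ with hv1
      have hv1val : (v1 : ℕ) = 2*n-1 := rfl
      have hkkj : kkOf n 𝔉 (sortPerm n 𝔉 p0) = k - 2*n := kk_sort _
      have hkks : kkOf n 𝔉 (sortPerm n 𝔉 p0) < s := by omega
      have hsp := (hsplit_kk _).mpr hkks
      have hi1 := (splitIdx_spec hsp).1
      have hi2 := (splitIdx_spec hsp).2.1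
      obtain ⟨u, hu, hmem⟩ := hedge_at v1 (sortPerm n 𝔉 p0)
      refine ⟨u, v1, hu, ?_⟩
      rw [heval _ _ _ hu hmem, hval_uv _ _ _ hu hmem]
      rw [if_neg (not_or.mpr ⟨by omega, by omega⟩)]
      omega
  · -- spectrum
    intro v
    set Mv := Finset.univ.filter
      (fun p : Fin (2*n-1) => (p:ℕ) < s ∧ 2 * splitIdx n 𝔉 (sortPerm n 𝔉 p) ≤ (v:ℕ)) with hMv
    set m := Mv.card with hm
    have hlow : ∀ p : Fin (2*n-1),
        ((p:ℕ) < s ∧ 2 * splitIdx n 𝔉 (sortPerm n 𝔉 p) ≤ (v:ℕ)) ↔ (p:ℕ) < m := by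
      intro p
      have := lowerset_iff Mv (fun a b hab hb => by
        simp only [hMv, Finset.mem_filter, Finset.mem_univ, true_and] at hb ⊢
        refine ⟨lt_of_le_of_lt hab hb.1, le_trans ?_ hb.2⟩
        have hmono := Tuple.monotone_sort (splitIdx n 𝔉) hab
        simp only [Function.comp_apply] at hmono
        unfold sortPerm
        omega) p
      simp only [hMv, Finset.mem_filter, Finset.mem_univ, true_and] at this
      exact this
    have hmlow : ∀ j, (kkOf n 𝔉 j < s ∧ 2 * splitIdx n 𝔉 j ≤ (v:ℕ)) ↔ kkOf n 𝔉 j < m := by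
      intro j
      have := hlow ((sortPerm n 𝔉).symm j)
      unfold kkOf
      rwa [Equiv.apply_symm_apply] at this
    have hms : m ≤ s := by
      rw [hm, hs, ← card_Sp (𝔉 := 𝔉) hn]
      apply Finset.card_le_card
      intro p hp
      simp only [hMv, Finset.mem_filter, Finset.mem_univ, true_and] at hp ⊢
      exact (mem_split_iff hn p).mpr hp.1
    refine ⟨m + 1, m + (2*n-1), ?_⟩
    ext k
    simp only [Set.mem_setOf_eq, Set.mem_Icc]
    constructor
    · rintro ⟨u, hu, rfl⟩
      obtain ⟨j, hj, -⟩ := hF.2 s(u,v) (hnd u v hu)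
      rw [heval u v j hu hj, hval_uv j u v hu hj]
      have hb := hkklt j
      by_cases hks : s ≤ kkOf n 𝔉 j
      · rw [if_pos (Or.inr hks)]; omega
      · have hkks := lt_of_not_ge hks
        by_cases hside : (v:ℕ) < 2 * splitIdx n 𝔉 j
        · rw [if_pos (Or.inl hside)]
          have : ¬ (kkOf n 𝔉 j < m) := by
            rw [← hmlow j]; push_neg; intro _; omega
          omega
        · rw [if_neg (by push_neg; exact ⟨by omega, by omega⟩)]
          have : kkOf n 𝔉 j < m := (hmlow j).mp ⟨hkks, by omega⟩
          omega
    · rintro ⟨hk1, hk2⟩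
      by_cases hk : k ≤ 2*n-1
      · set p0 : Fin (2*n-1) := ⟨k-1, by omega⟩ with hp0
        have hkkj : kkOf n 𝔉 (sortPerm n 𝔉 p0) = k - 1 := kk_sort _
        obtain ⟨u, hu, hmem⟩ := hedge_at v (sortPerm n 𝔉 p0)
        refine ⟨u, hu, ?_⟩
        rw [heval _ _ _ hu hmem, hval_uv _ _ _ hu hmem]
        by_cases hks : s ≤ kkOf n 𝔉 (sortPerm n 𝔉 p0)
        · rw [if_pos (Or.inr hks)]; omega
        · have hkks := lt_of_not_ge hks
          have hnm : ¬ (kkOf n 𝔉 (sortPerm n 𝔉 p0) < m) := by omega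
          have hside : ¬ (2 * splitIdx n 𝔉 (sortPerm n 𝔉 p0) ≤ (v:ℕ)) := by
            intro hc
            exact hnm ((hmlow _).mp ⟨hkks, hc⟩)
          rw [if_pos (Or.inl (by omega))]
          omega
      · set p0 : Fin (2*n-1) := ⟨k-2*n, by omega⟩ with hp0
        have hkkj : kkOf n 𝔉 (sortPerm n 𝔉 p0) = k - 2*n := kk_sort _
        have hkkm : kkOf n 𝔉 (sortPerm n 𝔉 p0) < m := by omega
        obtain ⟨hkks, hside⟩ := (hmlow _).mpr hkkm
        obtain ⟨u, hu, hmem⟩ := hedge_at v (sortPerm n 𝔉 p0)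
        refine ⟨u, hu, ?_⟩
        rw [heval _ _ _ hu hmem, hval_uv _ _ _ hu hmem]
        rw [if_neg (not_or.mpr ⟨by omega, by omega⟩)]
        omega
end DirAMain


lemma even_card_invol {α : Type*} [DecidableEq α] (f : α → α) (S : Finset α)
    (hf1 : ∀ a ∈ S, f a ∈ S) (hf2 : ∀ a ∈ S, f (f a) = a) (hf3 : ∀ a ∈ S, f a ≠ a) :
    Even S.card := by
  induction S using Finset.strongInduction with
  | _ S ih =>
    rcases S.eq_empty_or_nonempty with rfl | ⟨a, ha⟩
    · simp
    · have hfa : f a ∈ S := hf1 a ha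
      have hne : f a ≠ a := hf3 a ha
      set T := (S.erase a).erase (f a) with hT
      have hTsub : T ⊂ S := by
        refine Finset.ssubset_of_subset_of_ssubset ?_ (Finset.erase_ssubset ha)
        exact Finset.erase_subset _ _
      have hmemT : ∀ b, b ∈ T ↔ b ∈ S ∧ b ≠ a ∧ b ≠ f a := by
        intro b
        simp only [hT, Finset.mem_erase]
        tauto
      have hcard : T.card = S.card - 2 := by
        rw [hT, Finset.card_erase_of_mem, Finset.card_erase_of_mem ha]
        · omega
        · exact Finset.mem_erase.mpr ⟨hne, hfa⟩
      have hTeven : Even T.card := by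
        refine ih T hTsub (fun b hb => ?_) (fun b hb => hf2 b ((hmemT b).mp hb).1)
          (fun b hb => hf3 b ((hmemT b).mp hb).1)
        obtain ⟨hbS, hba, hbfa⟩ := (hmemT b).mp hb
        refine (hmemT (f b)).mpr ⟨hf1 b hbS, ?_, ?_⟩
        · intro h; apply hbfa; rw [← hf2 b hbS, h]
        · intro h
          have := congrArg f h
          rw [hf2 b hbS, hf2 a ha] at this
          exact hba this
      have h2 : 2 ≤ S.card := by
        have : {a, f a} ⊆ S := by
          intro x hx; rcases Finset.mem_insert.mp hx with rfl | hx
          · exact ha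
          · rwa [Finset.mem_singleton.mp hx]
        have := Finset.card_le_card this
        rwa [Finset.card_pair (Ne.symm hne)] at this
      obtain ⟨c, hc⟩ := hTeven
      exact ⟨c + 1, by omega⟩

lemma mod_unique_in_interval {m : ℕ} (hm : 0 < m) {L k k' : ℕ}
    (h1 : L ≤ k) (h2 : k ≤ L + (m-1)) (h1' : L ≤ k') (h2' : k' ≤ L + (m-1))
    (h : k % m = k' % m) : k = k' := by
  rcases le_total k k' with hle | hle
  · have hdvd := (Nat.modEq_iff_dvd' hle).mp h
    rcases Nat.eq_zero_or_pos (k' - k) with h0 | hpos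
    · omega
    · have := Nat.le_of_dvd hpos hdvd
      omega
  · have hdvd := (Nat.modEq_iff_dvd' hle).mp h.symm
    rcases Nat.eq_zero_or_pos (k - k') with h0 | hpos
    · omega
    · have := Nat.le_of_dvd hpos hdvd
      omega

lemma exists_mod_in_interval {m : ℕ} (hm : 0 < m) (L : ℕ) {j : ℕ} (hj : j < m) :
    ∃ k, L ≤ k ∧ k ≤ L + (m-1) ∧ k % m = j := by
  have hsurj := Finset.surj_on_of_inj_on_of_card_le
    (s := Finset.Icc L (L + (m-1))) (t := Finset.range m)
    (fun k _ => k % m) (fun k _ => Finset.mem_range.mpr (Nat.mod_lt _ hm))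
    (fun a₁ a₂ ha₁ ha₂ h => by
      rw [Finset.mem_Icc] at ha₁ ha₂
      exact mod_unique_in_interval hm ha₁.1 ha₁.2 ha₂.1 ha₂.2 h)
    (by rw [Finset.card_range, Nat.card_Icc]; omega)
  obtain ⟨k, hk, hkj⟩ := hsurj j (Finset.mem_range.mpr hj)
  rw [Finset.mem_Icc] at hk
  exact ⟨k, hk.1, hk.2, hkj.symm⟩

section DirB
attribute [local instance] Classical.propDecidable

variable {n t : ℕ} {c : Sym2 (Fin (2*n)) → ℕ}

lemma dirB1 (hn : 1 ≤ n)
    (h1 : ∀ u v w : Fin (2*n), u ≠ v → u ≠ w → v ≠ w → c s(u, v) ≠ c s(u, w))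
    (h2 : ∀ u v : Fin (2*n), u ≠ v → c s(u, v) ∈ Finset.Icc 1 t)
    (h3 : ∀ k : ℕ, 1 ≤ k → k ≤ t → ∃ u v : Fin (2*n), u ≠ v ∧ c s(u, v) = k)
    (h4 : ∀ v : Fin (2*n), ∃ a b : ℕ,
      {k : ℕ | ∃ u : Fin (2*n), u ≠ v ∧ c s(u, v) = k} = Set.Icc a b) :
    ∃ ℓ : Fin (2*n) → ℕ, ∀ v,
      {k : ℕ | ∃ u : Fin (2*n), u ≠ v ∧ c s(u, v) = k} = Set.Icc (ℓ v) (ℓ v + (2*n-2)) := by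
  have hcs : ∀ v : Fin (2*n), ∃ a : ℕ,
      {k : ℕ | ∃ u : Fin (2*n), u ≠ v ∧ c s(u, v) = k} = Set.Icc a (a + (2*n-2)) := by
    intro v
    obtain ⟨a, b, hab⟩ := h4 v
    have himg : {k : ℕ | ∃ u : Fin (2*n), u ≠ v ∧ c s(u, v) = k}
        = ↑((Finset.univ.filter (· ≠ v)).image (fun u => c s(u,v))) := by
      ext k
      simp only [Set.mem_setOf_eq, Finset.coe_image, Set.mem_image, Finset.mem_coe,
        Finset.mem_filter, Finset.mem_univ, true_and]
    have hinj : Set.InjOn (fun u => c s(u,v)) ↑(Finset.univ.filter (· ≠ v)) := by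
      intro u1 hu1 u2 hu2 heq
      simp only [Finset.coe_filter, Set.mem_setOf_eq, Finset.mem_univ, true_and] at hu1 hu2
      by_contra hne
      refine h1 v u1 u2 (Ne.symm hu1) (Ne.symm hu2) hne ?_
      rw [Sym2.eq_swap (a := v) (b := u1), Sym2.eq_swap (a := v) (b := u2)]
      exact heq
    have hcardim : ((Finset.univ.filter (· ≠ v)).image (fun u => c s(u,v))).card = 2*n-1 := by
      rw [Finset.card_image_of_injOn hinj]
      rw [Finset.filter_ne' Finset.univ v, Finset.card_erase_of_mem (Finset.mem_univ v)]
      simp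
    have hicc : Set.Icc a b = ↑((Finset.univ.filter (· ≠ v)).image (fun u => c s(u,v))) := by
      rw [← hab, himg]
    have hncard : (Set.Icc a b).ncard = 2*n-1 := by
      rw [hicc, Set.ncard_coe_finset, hcardim]
    have hile : a ≤ b := by
      by_contra hlt
      rw [Set.Icc_eq_empty (by omega)] at hncard
      simp at hncard
      omega
    have hicc_card : (Set.Icc a b).ncard = b + 1 - a := by
      rw [← Nat.card_coe_set_eq, Nat.card_eq_card_toFinset, Set.toFinset_Icc, Nat.card_Icc]
    have hba : b + 1 - a = 2*n-1 := by rw [← hicc_card, hncard]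
    have hb : b = a + (2*n-2) := by omega
    refine ⟨a, ?_⟩
    rw [hab, hb]
  choose ℓ hℓ using hcs
  exact ⟨ℓ, hℓ⟩

lemma dirB' (hn : 1 ≤ n)
    (h1 : ∀ u v w : Fin (2*n), u ≠ v → u ≠ w → v ≠ w → c s(u, v) ≠ c s(u, w))
    (h2 : ∀ u v : Fin (2*n), u ≠ v → c s(u, v) ∈ Finset.Icc 1 t)
    (h3 : ∀ k : ℕ, 1 ≤ k → k ≤ t → ∃ u v : Fin (2*n), u ≠ v ∧ c s(u, v) = k)
    (h4 : ∀ v : Fin (2*n), ∃ a b : ℕ,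
      {k : ℕ | ∃ u : Fin (2*n), u ≠ v ∧ c s(u, v) = k} = Set.Icc a b) :
    ∃ M : Fin (2*n-1) → Set (Sym2 (Fin (2*n))),
      ((∀ j, IsPerfectMatchingSet (2*n) (M j)) ∧
       (∀ e : Sym2 (Fin (2*n)), ¬ e.IsDiag → ∃! j, e ∈ M j)) ∧
      t ≤ 2*n-1 + {j | IsSplitted n (M j)}.ncard := by
  obtain ⟨ℓ, hℓ⟩ := dirB1 hn h1 h2 h3 h4
  have hmem_spec : ∀ (v : Fin (2*n)) (k : ℕ),
      (∃ u, u ≠ v ∧ c s(u,v) = k) ↔ (ℓ v ≤ k ∧ k ≤ ℓ v + (2*n-2)) := by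
    intro v k
    have := Set.ext_iff.mp (hℓ v) k
    simpa [Set.mem_Icc] using this
  have hspec_c : ∀ u v : Fin (2*n), u ≠ v →
      ℓ v ≤ c s(u,v) ∧ c s(u,v) ≤ ℓ v + (2*n-2) :=
    fun u v huv => (hmem_spec v _).mp ⟨u, huv, rfl⟩
  have hcol_range : ∀ u v : Fin (2*n), u ≠ v → 1 ≤ c s(u,v) ∧ c s(u,v) ≤ t := by
    intro u v huv
    have := h2 u v huv
    rw [Finset.mem_Icc] at this
    exact this
  have hℓ1 : ∀ v, 1 ≤ ℓ v := by
    intro v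
    obtain ⟨u, hu, hc⟩ := (hmem_spec v (ℓ v)).mpr ⟨le_rfl, by omega⟩
    have := (hcol_range u v hu).1
    omega
  have hℓt : ∀ v, ℓ v + (2*n-2) ≤ t := by
    intro v
    obtain ⟨u, hu, hc⟩ := (hmem_spec v (ℓ v + (2*n-2))).mpr ⟨by omega, le_rfl⟩
    have := (hcol_range u v hu).2
    omega
  have huniq_partner : ∀ (v : Fin (2*n)) (k : ℕ) (u u' : Fin (2*n)), u ≠ v → u' ≠ v →
      c s(u,v) = k → c s(u',v) = k → u = u' := by
    intro v k u u' hu hu' hc hc'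
    by_contra hne
    refine h1 v u u' (Ne.symm hu) (Ne.symm hu') hne ?_
    rw [Sym2.eq_swap (a := v) (b := u), Sym2.eq_swap (a := v) (b := u')]
    rw [hc, hc']
  -- N
  set N : ℕ → ℕ := fun k => (Finset.univ.filter (fun v : Fin (2*n) => ℓ v ≤ k)).card with hN
  have hNeven : ∀ k, k ≤ t → Even (N k) := by
    intro k
    induction k using Nat.strong_induction_on with
    | _ k ih =>
      intro hkt
      rcases Nat.eq_zero_or_pos k with rfl | hk1
      · have : (Finset.univ.filter (fun v : Fin (2*n) => ℓ v ≤ 0)) = ∅ := by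
          apply Finset.filter_false_of_mem
          intro v _
          have := hℓ1 v
          omega
        simp only [hN]
        rw [this]
        simp
      -- split
      have hsplitN : N k = N (k - (2*n-1)) +
          (Finset.univ.filter (fun v : Fin (2*n) => ℓ v ≤ k ∧ k ≤ ℓ v + (2*n-2))).card := by
        simp only [hN]
        have hdisj : Disjoint
            (Finset.univ.filter (fun v : Fin (2*n) => ℓ v ≤ k - (2*n-1)))
            (Finset.univ.filter (fun v : Fin (2*n) => ℓ v ≤ k ∧ k ≤ ℓ v + (2*n-2))) := by
          rw [Finset.disjoint_left]
          intro v hv1 hv2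
          simp only [Finset.mem_filter, Finset.mem_univ, true_and] at hv1 hv2
          have := hℓ1 v
          omega
        have hunion : Finset.univ.filter (fun v : Fin (2*n) => ℓ v ≤ k)
            = (Finset.univ.filter (fun v : Fin (2*n) => ℓ v ≤ k - (2*n-1)))
              ∪ (Finset.univ.filter (fun v : Fin (2*n) => ℓ v ≤ k ∧ k ≤ ℓ v + (2*n-2))) := by
          ext v
          simp only [Finset.mem_union, Finset.mem_filter, Finset.mem_univ, true_and]
          have := hℓ1 v
          omega
        rw [hunion, Finset.card_union_of_disjoint hdisj]
      have hVeven : Even (Finset.univ.filter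
          (fun v : Fin (2*n) => ℓ v ≤ k ∧ k ≤ ℓ v + (2*n-2))).card := by
        set f : Fin (2*n) → Fin (2*n) := fun v =>
          if h : ∃ u, u ≠ v ∧ c s(u,v) = k then h.choose else v with hf
        have hfspec : ∀ v : Fin (2*n), (ℓ v ≤ k ∧ k ≤ ℓ v + (2*n-2)) →
            f v ≠ v ∧ c s(f v, v) = k := by
          intro v hv
          have hex : ∃ u, u ≠ v ∧ c s(u,v) = k := (hmem_spec v k).mpr hv
          rw [hf]
          simp only [dif_pos hex]
          exact ⟨hex.choose_spec.1, hex.choose_spec.2⟩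
        apply even_card_invol f
        · intro v hv
          simp only [Finset.mem_filter, Finset.mem_univ, true_and] at hv ⊢
          obtain ⟨hne, hc⟩ := hfspec v hv
          refine (hmem_spec (f v) k).mp ⟨v, Ne.symm hne, ?_⟩
          rw [Sym2.eq_swap]
          exact hc
        · intro v hv
          simp only [Finset.mem_filter, Finset.mem_univ, true_and] at hv
          obtain ⟨hne, hc⟩ := hfspec v hv
          have hv2 : ℓ (f v) ≤ k ∧ k ≤ ℓ (f v) + (2*n-2) := by
            refine (hmem_spec (f v) k).mp ⟨v, Ne.symm hne, ?_⟩
            rw [Sym2.eq_swap]; exact hc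
          obtain ⟨hne2, hc2⟩ := hfspec (f v) hv2
          refine huniq_partner (f v) k (f (f v)) v hne2 (Ne.symm hne) hc2 ?_
          rw [Sym2.eq_swap]; exact hc
        · intro v hv
          simp only [Finset.mem_filter, Finset.mem_univ, true_and] at hv
          exact (hfspec v hv).1
      have hih : Even (N (k - (2*n-1))) := by
        rcases Nat.eq_zero_or_pos (k - (2*n-1)) with h0 | hpos
        · -- k - (2n-1) = 0 : same as base
          rw [h0]
          have : (Finset.univ.filter (fun v : Fin (2*n) => ℓ v ≤ 0)) = ∅ := by
            apply Finset.filter_false_of_mem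
            intro v _
            have := hℓ1 v
            omega
          simp only [hN]
          rw [this]
          simp
        · exact ih (k - (2*n-1)) (by omega) (by omega)
      rw [hsplitN]
      exact hih.add hVeven
  have hNmono : ∀ k k', k ≤ k' → N k ≤ N k' := by
    intro k k' hkk
    apply Finset.card_le_card
    intro v hv
    simp only [Finset.mem_filter, Finset.mem_univ, true_and] at hv ⊢
    omega
  have hNbound : ∀ k, 1 ≤ k → k + (2*n-1) ≤ t → 2 ≤ N k ∧ N k ≤ 2*n-2 := by
    intro k hk1 hk2
    constructor
    · obtain ⟨u, v, huv, hc⟩ := h3 k hk1 (by omega)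
      have hu : ℓ u ≤ k := by
        have : ∃ w, w ≠ u ∧ c s(w, u) = k := ⟨v, Ne.symm huv, by rw [Sym2.eq_swap]; exact hc⟩
        have := (hmem_spec u k).mp this
        omega
      have hv : ℓ v ≤ k := by
        have := (hspec_c u v huv).1
        omega
      have hsub : {u, v} ⊆ Finset.univ.filter (fun w : Fin (2*n) => ℓ w ≤ k) := by
        intro x hx
        rcases Finset.mem_insert.mp hx with rfl | hx
        · simp only [Finset.mem_filter, Finset.mem_univ, true_and]; exact hu
        · rw [Finset.mem_singleton.mp hx]
          simp only [Finset.mem_filter, Finset.mem_univ, true_and]; exact hv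
      calc 2 = ({u, v} : Finset (Fin (2*n))).card := (Finset.card_pair huv).symm
        _ ≤ _ := Finset.card_le_card hsub
    · obtain ⟨u, v, huv, hc⟩ := h3 (k + (2*n-1)) (by omega) hk2
      have hu : k + 1 ≤ ℓ u := by
        have : ∃ w, w ≠ u ∧ c s(w, u) = k + (2*n-1) :=
          ⟨v, Ne.symm huv, by rw [Sym2.eq_swap]; exact hc⟩
        have := (hmem_spec u _).mp this
        omega
      have hv : k + 1 ≤ ℓ v := by
        have := (hspec_c u v huv).2
        omega
      have hsub : Finset.univ.filter (fun w : Fin (2*n) => ℓ w ≤ k)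
          ⊆ (Finset.univ.erase u).erase v := by
        intro w hw
        simp only [Finset.mem_filter, Finset.mem_univ, true_and] at hw
        rw [Finset.mem_erase, Finset.mem_erase]
        refine ⟨?_, ?_, Finset.mem_univ w⟩
        · rintro rfl; omega
        · rintro rfl; omega
      have := Finset.card_le_card hsub
      rw [Finset.card_erase_of_mem
          (Finset.mem_erase.mpr ⟨Ne.symm huv, Finset.mem_univ v⟩),
        Finset.card_erase_of_mem (Finset.mem_univ u)] at this
      simp only [Finset.card_univ, Fintype.card_fin] at this
      simp only [hN]
      omega
  -- sort vertices
  set ρ : Equiv.Perm (Fin (2*n)) := Tuple.sort ℓ with hρ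
  have hpos : ∀ (k : ℕ) (p : Fin (2*n)), (p:ℕ) < N k ↔ ℓ (ρ p) ≤ k := by
    intro k p
    have hcardS : (Finset.univ.filter (fun p : Fin (2*n) => ℓ (ρ p) ≤ k)).card = N k := by
      simp only [hN]
      apply Finset.card_nbij (fun p => ρ p)
      · intro a ha
        simp only [Finset.mem_coe, Finset.mem_filter, Finset.mem_univ, true_and] at ha ⊢
        exact ha
      · intro a _ b _ hab
        exact ρ.injective hab
      · intro w hw
        simp only [Finset.coe_filter, Set.mem_setOf_eq, Finset.mem_univ, true_and] at hw ⊢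
        exact ⟨ρ.symm w, by simp only [Set.mem_setOf_eq, Equiv.apply_symm_apply]; exact hw,
          Equiv.apply_symm_apply _ w⟩
    have := lowerset_iff (Finset.univ.filter (fun p : Fin (2*n) => ℓ (ρ p) ≤ k))
      (fun a b hab hb => by
        simp only [Finset.mem_filter, Finset.mem_univ, true_and] at hb ⊢
        have hmono := Tuple.monotone_sort ℓ hab
        simp only [Function.comp_apply] at hmono
        rw [hρ] at hb ⊢
        omega) p
    rw [hcardS] at this
    simp only [Finset.mem_filter, Finset.mem_univ, true_and] at this
    exact this.symm
  -- injectivity transfer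
  have hρne : ∀ u v : Fin (2*n), u ≠ v → ρ u ≠ ρ v :=
    fun _ _ h hh => h (ρ.injective hh)
  have hmpos : 0 < 2*n-1 := by omega
  -- the matchings
  set M : Fin (2*n-1) → Set (Sym2 (Fin (2*n))) := fun j =>
    {e | ¬ e.IsDiag ∧ (c (Sym2.map ρ e) - 1) % (2*n-1) = (j:ℕ)} with hM
  have hMpair : ∀ (j : Fin (2*n-1)) (u v : Fin (2*n)),
      s(u,v) ∈ M j ↔ (u ≠ v ∧ (c s(ρ u, ρ v) - 1) % (2*n-1) = (j:ℕ)) := by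
    intro j u v
    simp only [hM, Set.mem_setOf_eq, Sym2.map_pair_eq, Sym2.mk_isDiag_iff]
  have hPM : ∀ j, IsPerfectMatchingSet (2*n) (M j) := by
    intro j
    refine ⟨fun e he => he.1, ?_⟩
    intro p
    obtain ⟨k0, hk01, hk02, hk0mod⟩ :=
      exists_mod_in_interval hmpos (ℓ (ρ p) - 1) j.isLt
    set k := k0 + 1 with hkdef
    have hL1 := hℓ1 (ρ p)
    obtain ⟨u, hu, hcu⟩ := (hmem_spec (ρ p) k).mpr ⟨by omega, by omega⟩
    have hne : Equiv.symm ρ u ≠ p := by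
      intro h
      apply hu
      rw [← h, Equiv.apply_symm_apply]
    have hmem : s(Equiv.symm ρ u, p) ∈ M j := by
      rw [hMpair]
      refine ⟨hne, ?_⟩
      rw [Equiv.apply_symm_apply, hcu, hkdef]
      simpa using hk0mod
    refine ⟨s(Equiv.symm ρ u, p), ⟨hmem, by simp⟩, ?_⟩
    rintro e' ⟨he', hpe'⟩
    obtain ⟨q, rfl⟩ : ∃ q, e' = s(q, p) := by
      obtain ⟨y, rfl⟩ := Sym2.mem_iff_exists.mp hpe'
      exact ⟨y, Sym2.eq_swap⟩
    obtain ⟨hqp, hqmod⟩ := (hMpair j q p).mp he'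
    have hq1 := hspec_c (ρ q) (ρ p) (hρne q p hqp)
    have hq0 := (hcol_range (ρ q) (ρ p) (hρne q p hqp)).1
    have hkeq : c s(ρ q, ρ p) = k := by
      have := mod_unique_in_interval hmpos
        (L := ℓ (ρ p) - 1) (k := c s(ρ q, ρ p) - 1) (k' := k - 1)
        (by omega) (by omega) (by omega) (by omega)
        (by rw [hqmod, hkdef]; simpa using hk0mod.symm)
      omega
    have : ρ q = u := huniq_partner (ρ p) k (ρ q) u (hρne q p hqp) hu hkeq hcu
    have hq : q = Equiv.symm ρ u := by
      rw [← this, Equiv.symm_apply_apply]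
    rw [hq]
  have hUF : ∀ e : Sym2 (Fin (2*n)), ¬ e.IsDiag → ∃! j, e ∈ M j := by
    intro e he
    induction e using Sym2.ind with
    | _ u v =>
      have huv : u ≠ v := fun h => he (Sym2.mk_isDiag_iff.mpr h)
      refine ⟨⟨(c s(ρ u, ρ v) - 1) % (2*n-1), Nat.mod_lt _ hmpos⟩,
        (hMpair _ u v).mpr ⟨huv, rfl⟩, ?_⟩
      rintro j' hj'
      obtain ⟨-, hmod⟩ := (hMpair j' u v).mp hj'
      exact Fin.ext (by rw [← hmod])
  by_cases ht : t ≤ 2*n-1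
  · exact ⟨M, ⟨hPM, hUF⟩, by omega⟩
  push_neg at ht
  have ht1 : 1 ≤ t := by omega
  -- t ≤ 4n-3
  obtain ⟨u1, v1, hne1, hc1⟩ := h3 1 le_rfl ht1
  have hℓv1 : ℓ v1 = 1 := by
    have h := (hspec_c u1 v1 hne1).1
    have := hℓ1 v1
    omega
  obtain ⟨u2, v2, hne2, hc2⟩ := h3 t ht1 le_rfl
  have hlv2 : t ≤ ℓ v2 + (2*n-2) := by
    have := (hspec_c u2 v2 hne2).2
    omega
  have hv2b : ℓ v2 ≤ 2*n-1 := by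
    rcases eq_or_ne v2 v1 with rfl | hne
    · omega
    · have hb1 : c s(v2, v1) ≤ ℓ v1 + (2*n-2) := (hspec_c v2 v1 hne).2
      have hb2 : ℓ v2 ≤ c s(v1, v2) := (hspec_c v1 v2 hne.symm).1
      have hsw : c s(v1, v2) = c s(v2, v1) := by rw [Sym2.eq_swap]
      omega
  have htb : t ≤ 4*n-3 := by omega
  have hsplit : ∀ (j : Fin (2*n-1)) (k : ℕ), 1 ≤ k → k + (2*n-1) ≤ t →
      (j : ℕ) = k - 1 → IsSplitted n (M j) := by
    intro j k hk1 hk2 hjval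
    have hNe := hNeven k (by omega)
    obtain ⟨hN2, hN2n⟩ := hNbound k hk1 hk2
    obtain ⟨i, hi⟩ := hNe
    refine ⟨i, by omega, by omega, ?_⟩
    intro u v huvmem
    obtain ⟨huv, hmod⟩ := (hMpair _ u v).mp huvmem
    rw [hjval] at hmod
    have hk'1 := (hcol_range (ρ u) (ρ v) (hρne u v huv)).1
    have hk't := (hcol_range (ρ u) (ρ v) (hρne u v huv)).2
    have hcase : c s(ρ u, ρ v) = k ∨ c s(ρ u, ρ v) = k + (2*n-1) := by
      have hdm := Nat.div_add_mod (c s(ρ u, ρ v) - 1) (2*n-1)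
      have hd2 : (c s(ρ u, ρ v) - 1) / (2*n-1) ≤ 1 := by
        by_contra hd
        push_neg at hd
        have : (2*n-1) * 2 ≤ (2*n-1) * ((c s(ρ u, ρ v) - 1) / (2*n-1)) :=
          Nat.mul_le_mul_left _ hd
        omega
      rcases Nat.le_one_iff_eq_zero_or_eq_one.mp hd2 with h0 | h0 <;>
        rw [h0] at hdm <;> omega
    have hvspec := hspec_c (ρ u) (ρ v) (hρne u v huv)
    have huspec : ℓ (ρ u) ≤ c s(ρ u, ρ v) ∧ c s(ρ u, ρ v) ≤ ℓ (ρ u) + (2*n-2) := by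
      have h := hspec_c (ρ v) (ρ u) (hρne v u huv.symm)
      rwa [Sym2.eq_swap] at h
    rcases hcase with heq | heq
    · left
      constructor
      · have := (hpos k u).mpr (by omega)
        omega
      · have := (hpos k v).mpr (by omega)
        omega
    · right
      constructor
      · have hgt : ¬ ((u:ℕ) < N k) := by
          rw [hpos k u]
          omega
        omega
      · have hgt : ¬ ((v:ℕ) < N k) := by
          rw [hpos k v]
          omega
        omega
  -- counting
  have hcount : t - (2*n-1) ≤ {j : Fin (2*n-1) | IsSplitted n (M j)}.ncard := by
    set g : ℕ → Fin (2*n-1) := fun k => ⟨(k-1) % (2*n-1), Nat.mod_lt _ hmpos⟩ with hg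
    have hgval : ∀ k, 1 ≤ k → k ≤ t-(2*n-1) → (g k : ℕ) = k-1 := by
      intro k hk1 hk2
      simp only [hg]
      exact Nat.mod_eq_of_lt (by omega)
    have hsubT : (Finset.Icc 1 (t-(2*n-1))).image g
        ⊆ {j : Fin (2*n-1) | IsSplitted n (M j)}.toFinset := by
      intro j hj
      obtain ⟨k, hk, rfl⟩ := Finset.mem_image.mp hj
      rw [Finset.mem_Icc] at hk
      rw [Set.mem_toFinset, Set.mem_setOf_eq]
      exact hsplit (g k) k hk.1 (by omega) (hgval k hk.1 hk.2)
    have hcardT : ((Finset.Icc 1 (t-(2*n-1))).image g).card = t-(2*n-1) := by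
      rw [Finset.card_image_of_injOn, Nat.card_Icc]
      · omega
      · intro a ha b hb hab
        rw [Finset.coe_Icc, Set.mem_Icc] at ha hb
        have := congrArg (Fin.val) hab
        rw [hgval a ha.1 ha.2, hgval b hb.1 hb.2] at this
        omega
    calc t - (2*n-1) = ((Finset.Icc 1 (t-(2*n-1))).image g).card := hcardT.symm
      _ ≤ {j : Fin (2*n-1) | IsSplitted n (M j)}.toFinset.card := Finset.card_le_card hsubT
      _ = {j : Fin (2*n-1) | IsSplitted n (M j)}.ncard :=
          (Set.ncard_eq_toFinset_card' _).symm
  exact ⟨M, ⟨hPM, hUF⟩, by omega⟩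

end DirB



-- Sets of achievable parameters
def SWset (n : ℕ) : Set ℕ :=
  {t : ℕ | ∃ c : Sym2 (Fin (2*n)) → ℕ, IsIntervalColoring (2*n) t c}

def SSset (n : ℕ) : Set ℕ := {s : ℕ | ∃ 𝔉 : Fin (2 * n - 1) → Set (Sym2 (Fin (2 * n))),
    IsOneFactorization n 𝔉 ∧ {j : Fin (2 * n - 1) | IsSplitted n (𝔉 j)}.ncard = s}

lemma bddW (n : ℕ) : BddAbove (SWset n) := by
  refine ⟨Fintype.card (Sym2 (Fin (2*n))), fun t ht => ?_⟩
  obtain ⟨c, _, _, h3, _⟩ := ht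
  rcases Nat.eq_zero_or_pos t with rfl | hpos
  · exact Nat.zero_le _
  obtain ⟨u0, v0, _, _⟩ := h3 1 le_rfl hpos
  have key : (Finset.Icc 1 t).card ≤ (Finset.univ : Finset (Sym2 (Fin (2*n)))).card := by
    have : ∀ k, ∃ e : Sym2 (Fin (2*n)), k ∈ Finset.Icc 1 t → c e = k := by
      intro k
      by_cases hk : k ∈ Finset.Icc 1 t
      · rw [Finset.mem_Icc] at hk
        obtain ⟨u, v, _, huv⟩ := h3 k hk.1 hk.2
        exact ⟨s(u,v), fun _ => huv⟩
      · exact ⟨s(u0,u0), fun h => absurd h hk⟩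
    choose f hf using this
    exact Finset.card_le_card_of_injOn f (fun _ _ => Finset.mem_univ _)
      (fun a ha b hb hab => by rw [← hf a ha, ← hf b hb, hab])
  simpa [Nat.card_Icc] using key

lemma bddS (n : ℕ) : BddAbove (SSset n) := by
  refine ⟨2*n-1, fun s hs => ?_⟩
  obtain ⟨𝔉, _, hcard⟩ := hs
  rw [← hcard]
  calc {j : Fin (2 * n - 1) | IsSplitted n (𝔉 j)}.ncard
      ≤ (Set.univ : Set (Fin (2*n-1))).ncard :=
        Set.ncard_le_ncard (Set.subset_univ _) Set.finite_univ
    _ = 2*n-1 := by rw [Set.ncard_univ]; simp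

lemma base (n : ℕ) (hn : 1 ≤ n) : 2*n-1 ∈ SWset n := ⟨baseColoring n, base' n hn⟩

lemma dirA (n : ℕ) (hn : 1 ≤ n) {s : ℕ} (hs : s ∈ SSset n) : 2*n-1+s ∈ SWset n := by
  obtain ⟨𝔉, hF, hcard⟩ := hs
  obtain ⟨c, hc⟩ := dirA' hn hF
  rw [hcard] at hc
  exact ⟨c, hc⟩

lemma dirB (n : ℕ) (hn : 1 ≤ n) {t : ℕ} (ht : t ∈ SWset n) : ∃ s ∈ SSset n, t ≤ 2*n-1+s := by
  obtain ⟨c, hc1, hc2, hc3, hc4⟩ := ht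
  obtain ⟨M, hM, hle⟩ := dirB' hn hc1 hc2 hc3 hc4
  exact ⟨_, ⟨M, hM, rfl⟩, by omega⟩

/-- Equivalence theorem: `W(K_{2n}) = 2n - 1 + σ_n`. -/
theorem statement_0 (n : ℕ) (hn : 1 ≤ n) :
    W (2 * n) = 2 * n - 1 + sigmaSplit n := by
  have hWdef : W (2 * n) = sSup (SWset n) := rfl
  have hσdef : sigmaSplit n = sSup (SSset n) := rfl
  have hne : (SWset n).Nonempty := ⟨_, base n hn⟩
  have hW : W (2*n) ∈ SWset n := by rw [hWdef]; exact Nat.sSup_mem hne (bddW n)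
  obtain ⟨s, hs, hle⟩ := dirB n hn hW
  have hσ : sigmaSplit n ∈ SSset n := by rw [hσdef]; exact Nat.sSup_mem ⟨s, hs⟩ (bddS n)
  refine le_antisymm (hle.trans (Nat.add_le_add_left ?_ _)) ?_
  · rw [hσdef]; exact le_csSup (bddS n) hs
  · rw [hWdef]; exact le_csSup (bddW n) (dirA n hn hσ)
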